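/- arXiv:2210.06448 — 2 statements merged into one kernel-verified Lean document; each statement's English description precedes it below -/
import Mathlib

section
/- With the setup of the pseudo-outcome identity, suppose there is a measurable partition of the domain into sets S1, S2, S3 such that μ(a,w) = μ0(a,w) for (a,w) ∈ S1 ∪ S3 and g(a,w) = g0(a,w) for (a,w) ∈ S2 ∪ S3. Then for almost every a in the relevant range, E[(Y − μ(A,W))/g(A,W) + ∫ μ(A, w̄) dQ0(w̄) | A = a] = θ0(a). (Double robustness: the pseudo-outcome has conditional mean θ0(a) if, at each point, at least one of the two nuisance functions is correct.) -/
open MeasureTheory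

private lemma integral_withDensity_ofReal' {α : Type*} [MeasurableSpace α] {ρ : Measure α}
    {d : α → ℝ} (hd : Measurable d) (F : α → ℝ) :
    ∫ a, F a ∂(ρ.withDensity fun a => ENNReal.ofReal (d a)) = ∫ a, max (d a) 0 * F a ∂ρ := by
  calc ∫ a, F a ∂(ρ.withDensity fun a => ENNReal.ofReal (d a))
      = ∫ a, (d a).toNNReal • F a ∂ρ := integral_withDensity_eq_integral_smul hd.real_toNNReal F
    _ = ∫ a, max (d a) 0 * F a ∂ρ := by
        refine integral_congr_ae (Filter.Eventually.of_forall fun a => ?_)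
        simp only [NNReal.smul_def, Real.coe_toNNReal', smul_eq_mul]

private lemma integrable_withDensity_ofReal_iff' {α : Type*} [MeasurableSpace α] {ρ : Measure α}
    {d : α → ℝ} (hd : Measurable d) {F : α → ℝ} :
    Integrable F (ρ.withDensity fun a => ENNReal.ofReal (d a)) ↔
      Integrable (fun a => max (d a) 0 * F a) ρ := by
  have h1 : Integrable F (ρ.withDensity fun a => ENNReal.ofReal (d a)) ↔
      Integrable (fun a => (d a).toNNReal • F a) ρ :=
    integrable_withDensity_iff_integrable_smul hd.real_toNNReal
  rw [h1]
  constructor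
  · intro h
    refine h.congr (Filter.Eventually.of_forall fun a => ?_)
    simp only [NNReal.smul_def, Real.coe_toNNReal', smul_eq_mul]
  · intro h
    refine h.congr (Filter.Eventually.of_forall fun a => ?_)
    simp only [NNReal.smul_def, Real.coe_toNNReal', smul_eq_mul]

/-- Double robustness of the pseudo-outcome: if there is a measurable partition
`S1, S2, S3` of the domain such that `μ = μ0` on `S1 ∪ S3` and `g = g0` on `S2 ∪ S3`,
then the conditional expectation given `A` of the pseudo-outcome
`(Y − μ(A,W))/g(A,W) + ∫ μ(A,w̄) dQ0(w̄)` equals `θ0(A)` almost surely, where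
`θ0(a) = ∫ μ0(a,w) dQ0(w)`. -/
theorem pseudo_outcome_double_robustness
    {Ω 𝕎 : Type*} [MeasurableSpace Ω] [MeasurableSpace 𝕎]
    (P : Measure Ω) [IsProbabilityMeasure P]
    (Y : Ω → ℝ) (A : Ω → ℝ) (W : Ω → 𝕎)
    (hY : Measurable Y) (hA : Measurable A) (hW : Measurable W)
    (hYint : Integrable Y P)
    (Q0 : Measure 𝕎) (hQ0 : Q0 = P.map W)
    (f0 : ℝ → ℝ) (μ0 g0 μ g : ℝ → 𝕎 → ℝ)
    (hf0 : Measurable f0)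
    (hμ0m : Measurable (Function.uncurry μ0))
    (hg0m : Measurable (Function.uncurry g0))
    (hμm : Measurable (Function.uncurry μ))
    (hgm : Measurable (Function.uncurry g))
    -- `A` has marginal Lebesgue density `f0`
    (hmargA : P.map A = (volume : Measure ℝ).withDensity fun a => ENNReal.ofReal (f0 a))
    -- the conditional law of `W` given `A = a` is `g0(a,·) dQ0`, i.e. the joint law of
    -- `(A, W)` has density `f0(a) g0(a,w)` with respect to Lebesgue ⊗ Q0
    (hjoint : P.map (fun ω => (A ω, W ω)) =
      ((volume : Measure ℝ).prod Q0).withDensity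
        fun p => ENNReal.ofReal (f0 p.1 * g0 p.1 p.2))
    -- `μ0` is the outcome regression `E[Y | A = a, W = w]`
    (hreg : MeasureTheory.condExp (MeasurableSpace.comap (fun ω => (A ω, W ω)) inferInstance) P Y
      =ᵐ[P] fun ω => μ0 (A ω) (W ω))
    -- `μ` is bounded and `g` is bounded away from zero (and above)
    (Cμ c C : ℝ) (hCμ : ∀ a w, |μ a w| ≤ Cμ)
    (hc : 0 < c) (hgb : ∀ a w, c ≤ g a w ∧ g a w ≤ C)
    -- the doubly-robust partition: `S1 ∪ S2 ∪ S3` covers the domain, `μ = μ0` on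
    -- `S1 ∪ S3`, and `g = g0` on `S2 ∪ S3`
    (S1 S2 S3 : Set (ℝ × 𝕎))
    (hS1 : MeasurableSet S1) (hS2 : MeasurableSet S2) (hS3 : MeasurableSet S3)
    (hcover : S1 ∪ S2 ∪ S3 = Set.univ)
    (hμeq : ∀ p ∈ S1 ∪ S3, μ p.1 p.2 = μ0 p.1 p.2)
    (hgeq : ∀ p ∈ S2 ∪ S3, g p.1 p.2 = g0 p.1 p.2) :
    MeasureTheory.condExp (MeasurableSpace.comap A inferInstance) P
        (fun ω => (Y ω - μ (A ω) (W ω)) / g (A ω) (W ω) + ∫ w, μ (A ω) w ∂Q0)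
      =ᵐ[P] fun ω => ∫ w, μ0 (A ω) w ∂Q0 := by
  -- basic setup
  have hQprob : IsProbabilityMeasure Q0 := hQ0 ▸ Measure.isProbabilityMeasure_map hW.aemeasurable
  have hT : Measurable (fun ω => (A ω, W ω)) := hA.prodMk hW
  have hmA : MeasurableSpace.comap A inferInstance ≤ ‹MeasurableSpace Ω› := hA.comap_le
  have hmT : MeasurableSpace.comap (fun ω => (A ω, W ω)) inferInstance ≤ ‹MeasurableSpace Ω› :=
    hT.comap_le
  have hg0pos : ∀ a w, (0:ℝ) < g a w := fun a w => lt_of_lt_of_le hc (hgb a w).1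
  have hGmeas : Measurable (fun p : ℝ × 𝕎 => μ0 p.1 p.2 - μ p.1 p.2) := hμ0m.sub hμm
  -- key pointwise facts from the partition
  have keyg : ∀ p : ℝ × 𝕎, μ0 p.1 p.2 - μ p.1 p.2 ≠ 0 → g0 p.1 p.2 = g p.1 p.2 := by
    intro p hGp
    have hp : p ∈ S1 ∪ S2 ∪ S3 := hcover ▸ Set.mem_univ p
    have hp2 : p ∈ S2 ∪ S3 := by
      rcases hp with (h1 | h2) | h3
      · exact absurd (sub_eq_zero.mpr (hμeq p (Or.inl h1)).symm) hGp
      · exact Or.inl h2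
      · exact Or.inr h3
    exact (hgeq p hp2).symm
  have keypos : ∀ p : ℝ × 𝕎, μ0 p.1 p.2 - μ p.1 p.2 ≠ 0 →
      max (f0 p.1 * g0 p.1 p.2) 0 = g p.1 p.2 * max (f0 p.1) 0 := by
    intro p h
    rw [keyg p h]
    calc max (f0 p.1 * g p.1 p.2) 0
        = max (f0 p.1 * g p.1 p.2) (0 * g p.1 p.2) := by rw [zero_mul]
      _ = max (f0 p.1) 0 * g p.1 p.2 := (max_mul_of_nonneg _ _ (hg0pos p.1 p.2).le).symm
      _ = g p.1 p.2 * max (f0 p.1) 0 := mul_comm _ _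
  -- transfer lemmas
  have hdTmeas : Measurable (fun p : ℝ × 𝕎 => f0 p.1 * g0 p.1 p.2) :=
    (hf0.comp measurable_fst).mul hg0m
  have intmapT : ∀ F : ℝ × 𝕎 → ℝ, Measurable F →
      ∫ ω, F (A ω, W ω) ∂P
        = ∫ p, max (f0 p.1 * g0 p.1 p.2) 0 * F p ∂((volume : Measure ℝ).prod Q0) := by
    intro F hF
    rw [← integral_map hT.aemeasurable hF.aestronglyMeasurable, hjoint,
      integral_withDensity_ofReal' hdTmeas F]
  have intTiff : ∀ F : ℝ × 𝕎 → ℝ, Measurable F →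
      (Integrable (fun ω => F (A ω, W ω)) P ↔
        Integrable (fun p => max (f0 p.1 * g0 p.1 p.2) 0 * F p) ((volume : Measure ℝ).prod Q0)) := by
    intro F hF
    rw [← integrable_withDensity_ofReal_iff' hdTmeas, ← hjoint,
      integrable_map_measure hF.aestronglyMeasurable hT.aemeasurable]
    exact Iff.rfl
  have intmapA : ∀ h : ℝ → ℝ, Measurable h →
      ∫ ω, h (A ω) ∂P = ∫ a, max (f0 a) 0 * h a ∂(volume : Measure ℝ) := by
    intro h hh
    rw [← integral_map hA.aemeasurable hh.aestronglyMeasurable, hmargA,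
      integral_withDensity_ofReal' hf0 h]
  have intAiff : ∀ h : ℝ → ℝ, Measurable h →
      (Integrable (fun ω => h (A ω)) P ↔
        Integrable (fun a => max (f0 a) 0 * h a) (volume : Measure ℝ)) := by
    intro h hh
    rw [← integrable_withDensity_ofReal_iff' hf0, ← hmargA,
      integrable_map_measure hh.aestronglyMeasurable hA.aemeasurable]
    exact Iff.rfl
  -- integrability of the basic blocks
  have hμTint : Integrable (fun ω => μ (A ω) (W ω)) P := by
    refine Integrable.mono' (integrable_const Cμ) (hμm.comp hT).aestronglyMeasurable ?_
    exact Filter.Eventually.of_forall fun ω => by simpa using hCμ (A ω) (W ω)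
  have hμ0Tint : Integrable (fun ω => μ0 (A ω) (W ω)) P := integrable_condExp.congr hreg
  have hGTint : Integrable (fun ω => μ0 (A ω) (W ω) - μ (A ω) (W ω)) P := hμ0Tint.sub hμTint
  have HGposf : Integrable
      (fun p : ℝ × 𝕎 => max (f0 p.1 * g0 p.1 p.2) 0 * (μ0 p.1 p.2 - μ p.1 p.2))
      ((volume : Measure ℝ).prod Q0) := (intTiff _ hGmeas).mp hGTint
  have hpos0meas : Measurable (fun a : ℝ => max (f0 a) 0) := hf0.max measurable_const
  have HGpos0 : Integrable (fun p : ℝ × 𝕎 => (μ0 p.1 p.2 - μ p.1 p.2) * max (f0 p.1) 0)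
      ((volume : Measure ℝ).prod Q0) := by
    refine Integrable.mono' (HGposf.norm.const_mul c⁻¹)
      (hGmeas.mul (hpos0meas.comp measurable_fst)).aestronglyMeasurable ?_
    refine Filter.Eventually.of_forall fun p => ?_
    show ‖(μ0 p.1 p.2 - μ p.1 p.2) * max (f0 p.1) 0‖
      ≤ c⁻¹ * ‖max (f0 p.1 * g0 p.1 p.2) 0 * (μ0 p.1 p.2 - μ p.1 p.2)‖
    rcases eq_or_ne (μ0 p.1 p.2 - μ p.1 p.2) 0 with h | h
    · simp [h]
    · have h1 : ‖(μ0 p.1 p.2 - μ p.1 p.2) * max (f0 p.1) 0‖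
          = |μ0 p.1 p.2 - μ p.1 p.2| * max (f0 p.1) 0 := by
        rw [norm_mul, Real.norm_eq_abs, Real.norm_eq_abs,
          abs_of_nonneg (le_max_right (f0 p.1) 0)]
      have h2 : ‖max (f0 p.1 * g0 p.1 p.2) 0 * (μ0 p.1 p.2 - μ p.1 p.2)‖
          = g p.1 p.2 * max (f0 p.1) 0 * |μ0 p.1 p.2 - μ p.1 p.2| := by
        rw [norm_mul, Real.norm_eq_abs, Real.norm_eq_abs,
          abs_of_nonneg (le_max_right (f0 p.1 * g0 p.1 p.2) 0), keypos p h]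
      rw [h1, h2, inv_mul_eq_div, le_div_iff₀ hc]
      nlinarith [abs_nonneg (μ0 p.1 p.2 - μ p.1 p.2), le_max_right (f0 p.1) (0:ℝ),
        (hgb p.1 p.2).1, hc.le,
        mul_nonneg (mul_nonneg (sub_nonneg.mpr (hgb p.1 p.2).1)
          (le_max_right (f0 p.1) (0:ℝ))) (abs_nonneg (μ0 p.1 p.2 - μ p.1 p.2))]
  -- slicewise integrability
  have hμaint : ∀ a, Integrable (fun w => μ a w) Q0 := fun a => by
    refine Integrable.mono' (integrable_const Cμ) hμm.of_uncurry_left.aestronglyMeasurable ?_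
    exact Filter.Eventually.of_forall fun w => by simpa using hCμ a w
  have hmslmeas : Measurable (fun a => ∫ w, μ a w ∂Q0) :=
    hμm.stronglyMeasurable.integral_prod_right.measurable
  have hθ0meas : Measurable (fun a => ∫ w, μ0 a w ∂Q0) :=
    hμ0m.stronglyMeasurable.integral_prod_right.measurable
  have hmsl_bound : ∀ a, ‖∫ w, μ a w ∂Q0‖ ≤ Cμ := fun a => by
    refine (norm_integral_le_integral_norm _).trans ?_
    calc ∫ w, ‖μ a w‖ ∂Q0 ≤ ∫ _, Cμ ∂Q0 :=
          integral_mono (hμaint a).norm (integrable_const _) fun w => by simpa using hCμ a w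
      _ = Cμ := by simp
  have hmslA_int : Integrable (fun ω => ∫ w, μ (A ω) w ∂Q0) P := by
    refine Integrable.mono' (integrable_const Cμ)
      ((hmslmeas.comp hA).aestronglyMeasurable) ?_
    exact Filter.Eventually.of_forall fun ω => hmsl_bound (A ω)
  -- integrability of the candidate conditional mean
  have Hθm_pos0_int : Integrable
      (fun a => max (f0 a) 0 * ((∫ w, μ0 a w ∂Q0) - ∫ w, μ a w ∂Q0)) (volume : Measure ℝ) := by
    refine Integrable.mono' HGpos0.integral_norm_prod_left
      (hpos0meas.mul (hθ0meas.sub hmslmeas)).aestronglyMeasurable ?_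
    filter_upwards [HGpos0.prod_right_ae] with a ha
    have ha' : Integrable (fun w => (μ0 a w - μ a w) * max (f0 a) 0) Q0 := ha
    show ‖max (f0 a) 0 * ((∫ w, μ0 a w ∂Q0) - ∫ w, μ a w ∂Q0)‖
      ≤ ∫ w, ‖(μ0 a w - μ a w) * max (f0 a) 0‖ ∂Q0
    rcases eq_or_ne (max (f0 a) 0) 0 with h0 | h0
    · rw [h0]
      simpa using integral_nonneg fun w => norm_nonneg _
    · have hGa : Integrable (fun w => μ0 a w - μ a w) Q0 := by
        have h2 := ha'.mul_const (max (f0 a) 0)⁻¹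
        exact h2.congr (Filter.Eventually.of_forall fun w => by field_simp)
      have hμ0a : Integrable (fun w => μ0 a w) Q0 := by
        have h3 := hGa.add (hμaint a)
        exact h3.congr (Filter.Eventually.of_forall fun w => by simp only [Pi.add_apply]; ring)
      have heq : (∫ w, μ0 a w ∂Q0) - ∫ w, μ a w ∂Q0 = ∫ w, (μ0 a w - μ a w) ∂Q0 :=
        (integral_sub hμ0a (hμaint a)).symm
      calc ‖max (f0 a) 0 * ((∫ w, μ0 a w ∂Q0) - ∫ w, μ a w ∂Q0)‖
          = max (f0 a) 0 * ‖∫ w, (μ0 a w - μ a w) ∂Q0‖ := by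
            rw [heq, norm_mul, Real.norm_eq_abs (max _ _), abs_of_nonneg (le_max_right _ _)]
        _ ≤ max (f0 a) 0 * ∫ w, ‖μ0 a w - μ a w‖ ∂Q0 :=
            mul_le_mul_of_nonneg_left (norm_integral_le_integral_norm _) (le_max_right _ _)
        _ = (∫ w, ‖μ0 a w - μ a w‖ ∂Q0) * max (f0 a) 0 := mul_comm _ _
        _ = ∫ w, ‖μ0 a w - μ a w‖ * max (f0 a) 0 ∂Q0 := (integral_mul_const _ _).symm
        _ = ∫ w, ‖(μ0 a w - μ a w) * max (f0 a) 0‖ ∂Q0 := by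
            refine integral_congr_ae (Filter.Eventually.of_forall fun w => ?_)
            simp only [norm_mul, Real.norm_eq_abs, abs_of_nonneg (le_max_right (f0 a) (0:ℝ))]
  have H_θmA_int : Integrable
      (fun ω => (∫ w, μ0 (A ω) w ∂Q0) - ∫ w, μ (A ω) w ∂Q0) P :=
    (intAiff _ (hθ0meas.sub hmslmeas)).mpr Hθm_pos0_int
  have H_θ0A_int : Integrable (fun ω => ∫ w, μ0 (A ω) w ∂Q0) P := by
    have h4 := H_θmA_int.add hmslA_int
    exact h4.congr (Filter.Eventually.of_forall fun ω => by simp only [Pi.add_apply]; ring)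
  -- integrability of the pseudo-outcome
  have hinvmeas : Measurable (fun ω => (g (A ω) (W ω))⁻¹) := (hgm.comp hT).inv
  have hinvbdd : ∀ ω, ‖(g (A ω) (W ω))⁻¹‖ ≤ c⁻¹ := fun ω => by
    rw [Real.norm_eq_abs, abs_of_pos (inv_pos.mpr (hg0pos _ _))]
    exact inv_anti₀ hc (hgb _ _).1
  have H_pseudo_int : Integrable
      (fun ω => (Y ω - μ (A ω) (W ω)) / g (A ω) (W ω) + ∫ w, μ (A ω) w ∂Q0) P := by
    have h1 := (hYint.sub hμTint).bdd_mul hinvmeas.aestronglyMeasurable (Filter.Eventually.of_forall hinvbdd)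
    refine (h1.add hmslA_int).congr (Filter.Eventually.of_forall fun ω => ?_)
    simp only [Pi.add_apply, Pi.sub_apply, div_eq_mul_inv]
    ring
  -- apply the characterization of conditional expectation
  refine Filter.EventuallyEq.symm
    (ae_eq_condExp_of_forall_setIntegral_eq hmA H_pseudo_int
      (fun s _ _ => H_θ0A_int.integrableOn) ?_ ?_)
  swap
  · have hAm : Measurable[MeasurableSpace.comap A inferInstance] A := fun s hs => ⟨s, hs, rfl⟩
    exact StronglyMeasurable.aestronglyMeasurable (hθ0meas.comp hAm).stronglyMeasurable
  -- main computation on sets of the sub-σ-algebra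
  intro s hs _
  obtain ⟨B, hB, rfl⟩ := hs
  set χ : ℝ → ℝ := B.indicator (fun _ => (1:ℝ)) with hχdef
  have hχmeas : Measurable χ := measurable_const.indicator hB
  have hχ_bdd : ∀ x, ‖χ x‖ ≤ 1 := fun x => by
    by_cases hx : x ∈ B <;> simp [hχdef, Set.indicator, hx]
  have hind : ∀ h : Ω → ℝ, ∫ x in A ⁻¹' B, h x ∂P = ∫ x, χ (A x) * h x ∂P := by
    intro h
    rw [← integral_indicator (hA hB)]
    refine integral_congr_ae (Filter.Eventually.of_forall fun x => ?_)
    by_cases hx : A x ∈ B <;> simp [hχdef, Set.indicator, hx]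
  -- ξ-blocks
  have hξmeas : Measurable (fun ω => χ (A ω) * (g (A ω) (W ω))⁻¹) :=
    (hχmeas.comp hA).mul hinvmeas
  have hξbdd : ∀ ω, ‖χ (A ω) * (g (A ω) (W ω))⁻¹‖ ≤ 1 * c⁻¹ := fun ω => by
    rw [norm_mul]
    exact mul_le_mul (hχ_bdd _) (hinvbdd ω) (norm_nonneg _) zero_le_one
  have hmulint : Integrable (fun ω => χ (A ω) * (g (A ω) (W ω))⁻¹ * Y ω) P :=
    hYint.bdd_mul hξmeas.aestronglyMeasurable (Filter.Eventually.of_forall hξbdd)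
  have hmulμ0 : Integrable (fun ω => χ (A ω) * (g (A ω) (W ω))⁻¹ * μ0 (A ω) (W ω)) P :=
    hμ0Tint.bdd_mul hξmeas.aestronglyMeasurable (Filter.Eventually.of_forall hξbdd)
  have hmulμ : Integrable (fun ω => χ (A ω) * (g (A ω) (W ω))⁻¹ * μ (A ω) (W ω)) P :=
    hμTint.bdd_mul hξmeas.aestronglyMeasurable (Filter.Eventually.of_forall hξbdd)
  have hχmslint : Integrable (fun ω => χ (A ω) * ∫ w, μ (A ω) w ∂Q0) P :=
    hmslA_int.bdd_mul (hχmeas.comp hA).aestronglyMeasurable (Filter.Eventually.of_forall fun ω => hχ_bdd _)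
  have hsm : StronglyMeasurable[MeasurableSpace.comap (fun ω => (A ω, W ω)) inferInstance]
      (fun ω => χ (A ω) * (g (A ω) (W ω))⁻¹) := by
    have hTm : Measurable[MeasurableSpace.comap (fun ω => (A ω, W ω)) inferInstance]
        (fun ω => (A ω, W ω)) := fun s hs => ⟨s, hs, rfl⟩
    exact (((hχmeas.comp measurable_fst).mul hgm.inv).comp hTm).stronglyMeasurable
  -- the tower property step
  have tower : ∫ ω, χ (A ω) * (g (A ω) (W ω))⁻¹ * Y ω ∂P
      = ∫ ω, χ (A ω) * (g (A ω) (W ω))⁻¹ * μ0 (A ω) (W ω) ∂P := by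
    have hmul := condExp_mul_of_stronglyMeasurable_left hsm hmulint hYint
    calc ∫ ω, χ (A ω) * (g (A ω) (W ω))⁻¹ * Y ω ∂P
        = ∫ ω, (MeasureTheory.condExp
            (MeasurableSpace.comap (fun ω => (A ω, W ω)) inferInstance) P
            ((fun ω => χ (A ω) * (g (A ω) (W ω))⁻¹) * Y)) ω ∂P := (integral_condExp hmT).symm
      _ = ∫ ω, ((fun ω => χ (A ω) * (g (A ω) (W ω))⁻¹) * MeasureTheory.condExp
            (MeasurableSpace.comap (fun ω => (A ω, W ω)) inferInstance) P Y) ω ∂P :=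
          integral_congr_ae hmul
      _ = ∫ ω, χ (A ω) * (g (A ω) (W ω))⁻¹ * μ0 (A ω) (W ω) ∂P := by
          refine integral_congr_ae ?_
          filter_upwards [hreg] with ω hω
          simp only [Pi.mul_apply]
          rw [hω]
  -- transfer of the central term
  have stepS : ∫ ω, χ (A ω) * (g (A ω) (W ω))⁻¹ * μ0 (A ω) (W ω) ∂P
        - ∫ ω, χ (A ω) * (g (A ω) (W ω))⁻¹ * μ (A ω) (W ω) ∂P
      = ∫ a, max (f0 a) 0 * (χ a * ((∫ w, μ0 a w ∂Q0) - ∫ w, μ a w ∂Q0))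
          ∂(volume : Measure ℝ) := by
    rw [← integral_sub hmulμ0 hmulμ]
    have e0 : ∫ ω, (χ (A ω) * (g (A ω) (W ω))⁻¹ * μ0 (A ω) (W ω)
          - χ (A ω) * (g (A ω) (W ω))⁻¹ * μ (A ω) (W ω)) ∂P
        = ∫ ω, (fun p : ℝ × 𝕎 => χ p.1 * (g p.1 p.2)⁻¹ * (μ0 p.1 p.2 - μ p.1 p.2)) (A ω, W ω) ∂P := by
      refine integral_congr_ae (Filter.Eventually.of_forall fun ω => ?_)
      simp only
      ring
    have hFmeas : Measurable (fun p : ℝ × 𝕎 => χ p.1 * (g p.1 p.2)⁻¹ * (μ0 p.1 p.2 - μ p.1 p.2)) :=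
      ((hχmeas.comp measurable_fst).mul hgm.inv).mul hGmeas
    rw [e0, intmapT (fun p : ℝ × 𝕎 => χ p.1 * (g p.1 p.2)⁻¹ * (μ0 p.1 p.2 - μ p.1 p.2)) hFmeas]
    have e2 : (fun p : ℝ × 𝕎 => max (f0 p.1 * g0 p.1 p.2) 0
          * (χ p.1 * (g p.1 p.2)⁻¹ * (μ0 p.1 p.2 - μ p.1 p.2)))
        = fun p : ℝ × 𝕎 => χ p.1 * ((μ0 p.1 p.2 - μ p.1 p.2) * max (f0 p.1) 0) := by
      funext p
      rcases eq_or_ne (μ0 p.1 p.2 - μ p.1 p.2) 0 with h | h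
      · rw [h]; ring
      · rw [keypos p h]
        have hgne : g p.1 p.2 ≠ 0 := (hg0pos p.1 p.2).ne'
        field_simp
    rw [e2]
    have hprodint : Integrable
        (fun p : ℝ × 𝕎 => χ p.1 * ((μ0 p.1 p.2 - μ p.1 p.2) * max (f0 p.1) 0))
        ((volume : Measure ℝ).prod Q0) :=
      HGpos0.bdd_mul (hχmeas.comp measurable_fst).aestronglyMeasurable (Filter.Eventually.of_forall fun p => hχ_bdd _)
    rw [integral_prod _ hprodint]
    refine integral_congr_ae ?_
    filter_upwards [HGpos0.prod_right_ae] with a ha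
    have ha' : Integrable (fun w => (μ0 a w - μ a w) * max (f0 a) 0) Q0 := ha
    show ∫ w, χ a * ((μ0 a w - μ a w) * max (f0 a) 0) ∂Q0
      = max (f0 a) 0 * (χ a * ((∫ w, μ0 a w ∂Q0) - ∫ w, μ a w ∂Q0))
    rcases eq_or_ne (max (f0 a) 0) 0 with h0 | h0
    · simp [h0]
    · have hGa : Integrable (fun w => μ0 a w - μ a w) Q0 := by
        have h2 := ha'.mul_const (max (f0 a) 0)⁻¹
        exact h2.congr (Filter.Eventually.of_forall fun w => by field_simp)
      have hμ0a : Integrable (fun w => μ0 a w) Q0 := by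
        have h3 := hGa.add (hμaint a)
        exact h3.congr (Filter.Eventually.of_forall fun w => by simp only [Pi.add_apply]; ring)
      rw [integral_const_mul, integral_mul_const, integral_sub hμ0a (hμaint a)]
      ring
  -- both sides, transferred to Lebesgue integrals
  have stepL : ∫ x in A ⁻¹' B, (∫ w, μ0 (A x) w ∂Q0) ∂P
      = ∫ a, max (f0 a) 0 * (χ a * ∫ w, μ0 a w ∂Q0) ∂(volume : Measure ℝ) := by
    rw [hind]
    exact intmapA (fun a => χ a * ∫ w, μ0 a w ∂Q0) (hχmeas.mul hθ0meas)
  have HD2 : ∫ ω, χ (A ω) * (∫ w, μ (A ω) w ∂Q0) ∂P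
      = ∫ a, max (f0 a) 0 * (χ a * ∫ w, μ a w ∂Q0) ∂(volume : Measure ℝ) :=
    intmapA (fun a => χ a * ∫ w, μ a w ∂Q0) (hχmeas.mul hmslmeas)
  have stepR : ∫ x in A ⁻¹' B, ((Y x - μ (A x) (W x)) / g (A x) (W x) + ∫ w, μ (A x) w ∂Q0) ∂P
      = (∫ ω, χ (A ω) * (g (A ω) (W ω))⁻¹ * Y ω ∂P
          - ∫ ω, χ (A ω) * (g (A ω) (W ω))⁻¹ * μ (A ω) (W ω) ∂P)
        + ∫ ω, χ (A ω) * (∫ w, μ (A ω) w ∂Q0) ∂P := by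
    have hsubint : Integrable
        (fun ω => χ (A ω) * (g (A ω) (W ω))⁻¹ * Y ω
          - χ (A ω) * (g (A ω) (W ω))⁻¹ * μ (A ω) (W ω)) P := hmulint.sub hmulμ
    calc ∫ x in A ⁻¹' B, ((Y x - μ (A x) (W x)) / g (A x) (W x) + ∫ w, μ (A x) w ∂Q0) ∂P
        = ∫ x, χ (A x) * ((Y x - μ (A x) (W x)) / g (A x) (W x) + ∫ w, μ (A x) w ∂Q0) ∂P :=
          hind _
      _ = ∫ x, ((χ (A x) * (g (A x) (W x))⁻¹ * Y x
            - χ (A x) * (g (A x) (W x))⁻¹ * μ (A x) (W x))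
            + χ (A x) * ∫ w, μ (A x) w ∂Q0) ∂P := by
          refine integral_congr_ae (Filter.Eventually.of_forall fun x => ?_)
          simp only [div_eq_mul_inv]
          ring
      _ = (∫ x, (χ (A x) * (g (A x) (W x))⁻¹ * Y x
            - χ (A x) * (g (A x) (W x))⁻¹ * μ (A x) (W x)) ∂P)
            + ∫ x, χ (A x) * (∫ w, μ (A x) w ∂Q0) ∂P := integral_add hsubint hχmslint
      _ = (∫ ω, χ (A ω) * (g (A ω) (W ω))⁻¹ * Y ω ∂P
            - ∫ ω, χ (A ω) * (g (A ω) (W ω))⁻¹ * μ (A ω) (W ω) ∂P)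
            + ∫ ω, χ (A ω) * (∫ w, μ (A ω) w ∂Q0) ∂P := by
          rw [integral_sub hmulint hmulμ]
  have I1 : Integrable
      (fun a => max (f0 a) 0 * (χ a * ((∫ w, μ0 a w ∂Q0) - ∫ w, μ a w ∂Q0)))
      (volume : Measure ℝ) :=
    (intAiff _ (hχmeas.mul (hθ0meas.sub hmslmeas))).mp
      (H_θmA_int.bdd_mul (hχmeas.comp hA).aestronglyMeasurable (Filter.Eventually.of_forall fun ω => hχ_bdd _))
  have I2 : Integrable (fun a => max (f0 a) 0 * (χ a * ∫ w, μ a w ∂Q0))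
      (volume : Measure ℝ) :=
    (intAiff _ (hχmeas.mul hmslmeas)).mp hχmslint
  calc ∫ x in A ⁻¹' B, (∫ w, μ0 (A x) w ∂Q0) ∂P
      = ∫ a, max (f0 a) 0 * (χ a * ∫ w, μ0 a w ∂Q0) ∂(volume : Measure ℝ) := stepL
    _ = ∫ a, (max (f0 a) 0 * (χ a * ((∫ w, μ0 a w ∂Q0) - ∫ w, μ a w ∂Q0))
          + max (f0 a) 0 * (χ a * ∫ w, μ a w ∂Q0)) ∂(volume : Measure ℝ) := by
        refine integral_congr_ae (Filter.Eventually.of_forall fun a => ?_)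
        ring
    _ = (∫ a, max (f0 a) 0 * (χ a * ((∫ w, μ0 a w ∂Q0) - ∫ w, μ a w ∂Q0))
            ∂(volume : Measure ℝ))
          + ∫ a, max (f0 a) 0 * (χ a * ∫ w, μ a w ∂Q0) ∂(volume : Measure ℝ) :=
        integral_add I1 I2
    _ = (∫ ω, χ (A ω) * (g (A ω) (W ω))⁻¹ * μ0 (A ω) (W ω) ∂P
          - ∫ ω, χ (A ω) * (g (A ω) (W ω))⁻¹ * μ (A ω) (W ω) ∂P)
        + ∫ ω, χ (A ω) * (∫ w, μ (A ω) w ∂Q0) ∂P := by rw [stepS, HD2]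
    _ = (∫ ω, χ (A ω) * (g (A ω) (W ω))⁻¹ * Y ω ∂P
          - ∫ ω, χ (A ω) * (g (A ω) (W ω))⁻¹ * μ (A ω) (W ω) ∂P)
        + ∫ ω, χ (A ω) * (∫ w, μ (A ω) w ∂Q0) ∂P := by rw [tower]
    _ = ∫ x in A ⁻¹' B, ((Y x - μ (A x) (W x)) / g (A x) (W x) + ∫ w, μ (A x) w ∂Q0) ∂P :=
        stepR.symm
end

section
/- Under the same smoothness assumptions (θ0 twice continuously differentiable near a0, f0 positive and Lipschitz near a0, K a symmetric Lipschitz kernel supported in [−1,1]), define the population third-order local polynomial second-derivative functional θ_b^{(2)}(a0) = 2 b⁻² e3ᵀ D_{b,3}⁻¹ ∫ w3(a) K_{b,a0}(a) θ0(a) f0(a) da, where w3(a) = (1, (a−a0)/b, ((a−a0)/b)², ((a−a0)/b)³)ᵀ and D_{b,3} = ∫ w3 w3ᵀ K_{b,a0} f0. Then θ_b^{(2)}(a0) → θ0''(a0) as b → 0. -/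
open MeasureTheory Matrix Topology Filter

/-- The third-order local polynomial design vector
`w3(a) = (1, (a−a0)/b, ((a−a0)/b)², ((a−a0)/b)³)ᵀ`. -/
noncomputable def lcWeight (a0 b a : ℝ) : Fin 4 → ℝ :=
  ![1, (a - a0) / b, ((a - a0) / b) ^ 2, ((a - a0) / b) ^ 3]

/-- The population third-order local polynomial moment matrix
`D_{b,3} = ∫ w3 w3ᵀ K_{b,a0} f0`. -/
noncomputable def lcMatrix (K f0 : ℝ → ℝ) (a0 b : ℝ) : Matrix (Fin 4) (Fin 4) ℝ :=
  Matrix.of fun i j =>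
    ∫ a, lcWeight a0 b a i * lcWeight a0 b a j * (K ((a - a0) / b) / b) * f0 a

/-- The population third-order local polynomial second-derivative functional
`θ_b^{(2)}(a0) = 2 b⁻² e3ᵀ D_{b,3}⁻¹ ∫ w3(a) K_{b,a0}(a) θ0(a) f0(a) da`. -/
noncomputable def lcSecondDeriv (K f0 θ0 : ℝ → ℝ) (a0 b : ℝ) : ℝ :=
  2 / b ^ 2 *
    ((lcMatrix K f0 a0 b)⁻¹ *ᵥ
      fun i => ∫ a, lcWeight a0 b a i * (K ((a - a0) / b) / b) * θ0 a * f0 a) 2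

/-- The kernel moment matrix `S4 = (c_{i+j−2})_{1 ≤ i,j ≤ 4}`. -/
noncomputable def kernelMomentMatrix4 (K : ℝ → ℝ) : Matrix (Fin 4) (Fin 4) ℝ :=
  Matrix.of fun i j => ∫ u, u ^ ((i : ℕ) + (j : ℕ)) * K u

/- Auxiliary lemmas -/

lemma integrable_of_kernel_support {F : ℝ → ℝ}
    (h0 : ∀ u : ℝ, u ∉ Set.Icc (-1:ℝ) 1 → F u = 0)
    (hc : ContinuousOn F (Set.Icc (-1:ℝ) 1)) : Integrable F := by
  have hF : F = (Set.Icc (-1:ℝ) 1).indicator F := by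
    funext u
    by_cases h : u ∈ Set.Icc (-1:ℝ) 1
    · rw [Set.indicator_of_mem h]
    · rw [Set.indicator_of_notMem h, h0 u h]
  rw [hF, integrable_indicator_iff measurableSet_Icc]
  exact hc.integrableOn_Icc

lemma integral_subst (G : ℝ → ℝ) (a0 b : ℝ) (hb : 0 < b) :
    ∫ a, G ((a - a0) / b) / b = ∫ u, G u := by
  have h1 : (∫ a, G ((a - a0) / b)) = ∫ x, G (x / b) :=
    integral_sub_right_eq_self (fun x => G (x / b)) a0
  rw [integral_div, h1, MeasureTheory.Measure.integral_comp_div (fun u => G u) b,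
    abs_of_pos hb, smul_eq_mul]
  field_simp

lemma lcWeight_eq (a0 b a : ℝ) (i : Fin 4) :
    lcWeight a0 b a i = ((a - a0)/b) ^ (i:ℕ) := by
  fin_cases i <;> simp [lcWeight]

lemma lcMatrix_eq (K f0 : ℝ → ℝ) (a0 δ : ℝ) (b : ℝ) (hb : b ∈ Set.Ioo (0:ℝ) δ) (i j : Fin 4) :
    lcMatrix K f0 a0 b i j = ∫ u, u ^ ((i:ℕ)+(j:ℕ)) * K u * f0 (a0 + b * u) := by
  have hb0 : b ≠ 0 := ne_of_gt hb.1
  show (∫ a, lcWeight a0 b a i * lcWeight a0 b a j * (K ((a - a0) / b) / b) * f0 a) = _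
  have hptw : ∀ a : ℝ, lcWeight a0 b a i * lcWeight a0 b a j * (K ((a - a0)/b)/b) * f0 a
      = (fun u => u ^ ((i:ℕ)+(j:ℕ)) * K u * f0 (a0 + b * u)) ((a - a0)/b) / b := by
    intro a
    rw [lcWeight_eq, lcWeight_eq]
    have ha : a0 + b * ((a - a0)/b) = a := by field_simp; ring
    simp only [ha, pow_add]
    ring
  simp only [hptw]
  exact integral_subst (fun u => u ^ ((i:ℕ)+(j:ℕ)) * K u * f0 (a0 + b * u)) a0 b hb.1

lemma lcVec_eq (K f0 θ0 : ℝ → ℝ) (a0 δ : ℝ) (b : ℝ) (hb : b ∈ Set.Ioo (0:ℝ) δ) (i : Fin 4) :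
    (∫ a, lcWeight a0 b a i * (K ((a - a0) / b) / b) * θ0 a * f0 a)
      = ∫ u, u ^ (i:ℕ) * K u * (θ0 (a0 + b * u) * f0 (a0 + b * u)) := by
  have hb0 : b ≠ 0 := ne_of_gt hb.1
  have hptw : ∀ a : ℝ, lcWeight a0 b a i * (K ((a - a0)/b)/b) * θ0 a * f0 a
      = (fun u => u ^ (i:ℕ) * K u * (θ0 (a0 + b * u) * f0 (a0 + b * u))) ((a - a0)/b) / b := by
    intro a
    rw [lcWeight_eq]
    have ha : a0 + b * ((a - a0)/b) = a := by field_simp; ring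
    simp only [ha]
    ring
  simp only [hptw]
  exact integral_subst (fun u => u ^ (i:ℕ) * K u * (θ0 (a0 + b * u) * f0 (a0 + b * u))) a0 b hb.1

lemma decomp (K f0 θ0 : ℝ → ℝ) (a0 δ b : ℝ) (hb : b ∈ Set.Ioo (0:ℝ) δ) (d1 d2 : ℝ)
    (hint : ∀ (p : ℕ) (g : ℝ → ℝ), ContinuousOn g (Metric.ball a0 δ) →
      Integrable (fun u => u ^ p * K u * g (a0 + b * u)))
    (hθc : ContinuousOn θ0 (Metric.ball a0 δ))
    (hf0c : ContinuousOn f0 (Metric.ball a0 δ)) (i : Fin 4) :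
    (∫ u, u ^ (i:ℕ) * K u * (θ0 (a0 + b * u) * f0 (a0 + b * u)))
      = (lcMatrix K f0 a0 b *ᵥ ![θ0 a0, b * d1, b^2 * (d2/2), 0]) i
        + ∫ u, u ^ (i:ℕ) * K u *
            (f0 (a0 + b * u) *
              (θ0 (a0 + b * u) - θ0 a0 - ((a0 + b * u) - a0) * d1
                - ((a0 + b * u) - a0)^2/2 * d2)) := by
  have hQc : ContinuousOn (fun x => f0 x *
      (θ0 x - θ0 a0 - (x - a0) * d1 - (x - a0)^2/2 * d2)) (Metric.ball a0 δ) := by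
    apply hf0c.mul
    apply ContinuousOn.sub
    apply ContinuousOn.sub
    apply ContinuousOn.sub hθc continuousOn_const
    · exact (ContinuousOn.sub continuousOn_id continuousOn_const).mul continuousOn_const
    · exact ContinuousOn.mul (by fun_prop) continuousOn_const
  have h0 : Integrable (fun u => u ^ ((i:ℕ)+0) * K u * f0 (a0 + b * u) * θ0 a0) :=
    (hint _ f0 hf0c).mul_const _
  have h1 : Integrable (fun u => u ^ ((i:ℕ)+1) * K u * f0 (a0 + b * u) * (b * d1)) :=
    (hint _ f0 hf0c).mul_const _
  have h2 : Integrable (fun u => u ^ ((i:ℕ)+2) * K u * f0 (a0 + b * u) * (b^2 * (d2/2))) :=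
    (hint _ f0 hf0c).mul_const _
  have hQ : Integrable (fun u => u ^ (i:ℕ) * K u *
      (f0 (a0 + b * u) *
        (θ0 (a0 + b * u) - θ0 a0 - ((a0 + b * u) - a0) * d1
          - ((a0 + b * u) - a0)^2/2 * d2))) := hint _ _ hQc
  simp only [Matrix.mulVec, dotProduct, Fin.sum_univ_four]
  simp only [lcMatrix_eq K f0 a0 δ b hb, Matrix.cons_val_zero, Matrix.cons_val_one,
    Matrix.head_cons, Matrix.cons_val_two, Matrix.tail_cons, Matrix.cons_val_three]
  simp only [show ((0:Fin 4):ℕ) = 0 from rfl, show ((1:Fin 4):ℕ) = 1 from rfl,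
    show ((2:Fin 4):ℕ) = 2 from rfl, show ((3:Fin 4):ℕ) = 3 from rfl]
  rw [mul_zero, add_zero]
  rw [← integral_mul_const, ← integral_mul_const, ← integral_mul_const]
  have h01 : Integrable (fun u => u ^ ((i:ℕ)+0) * K u * f0 (a0 + b * u) * θ0 a0
      + u ^ ((i:ℕ)+1) * K u * f0 (a0 + b * u) * (b * d1)) := h0.add h1
  have h012 : Integrable (fun u => (u ^ ((i:ℕ)+0) * K u * f0 (a0 + b * u) * θ0 a0
      + u ^ ((i:ℕ)+1) * K u * f0 (a0 + b * u) * (b * d1))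
      + u ^ ((i:ℕ)+2) * K u * f0 (a0 + b * u) * (b^2 * (d2/2))) := h01.add h2
  rw [← integral_add h0 h1, ← integral_add h01 h2, ← integral_add h012 hQ]
  congr 1
  funext u
  simp only [add_sub_cancel_left, pow_add]
  ring

lemma taylor2 (θ0 : ℝ → ℝ) (a0 δ : ℝ) (hδ : 0 < δ)
    (hθ : ContDiffOn ℝ 2 θ0 (Metric.ball a0 δ)) (ε : ℝ) (hε : 0 < ε) :
    ∀ᶠ h in 𝓝 (0:ℝ), |θ0 (a0 + h) - θ0 a0 - h * deriv θ0 a0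
      - h^2/2 * deriv (deriv θ0) a0| ≤ ε * h^2 := by
  have hopen : IsOpen (Metric.ball a0 δ) := Metric.isOpen_ball
  have hmem0 : a0 ∈ Metric.ball a0 δ := Metric.mem_ball_self hδ
  have hg : ∀ x ∈ Metric.ball a0 δ, HasDerivAt θ0 (deriv θ0 x) x := by
    intro x hx
    exact ((hθ.differentiableOn two_ne_zero x hx).differentiableAt
      (hopen.mem_nhds hx)).hasDerivAt
  have hgd : ContDiffOn ℝ 1 (deriv θ0) (Metric.ball a0 δ) :=
    hθ.deriv_of_isOpen hopen (by norm_num)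
  have hg'a : HasDerivAt (deriv θ0) (deriv (deriv θ0) a0) a0 :=
    ((hgd.differentiableOn one_ne_zero a0 hmem0).differentiableAt
      (hopen.mem_nhds hmem0)).hasDerivAt
  have hlo := hasDerivAt_iff_isLittleO.1 hg'a
  have h1 := Asymptotics.isLittleO_iff.1 hlo hε
  rw [Metric.eventually_nhds_iff] at h1
  obtain ⟨η, hη, hbound⟩ := h1
  have hev : ∀ᶠ h in 𝓝 (0:ℝ), |h| < min η δ := by
    filter_upwards [Metric.ball_mem_nhds (0:ℝ) (lt_min hη hδ)] with h hh
    rw [Metric.mem_ball, Real.dist_eq, sub_zero] at hh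
    exact hh
  filter_upwards [hev] with h hh
  set d1 := deriv θ0 a0
  set d2 := deriv (deriv θ0) a0
  set s : Set ℝ := Set.Icc (-|h|) (|h|) with hs
  have h0s : (0:ℝ) ∈ s := ⟨neg_nonpos.2 (abs_nonneg h), abs_nonneg h⟩
  have hhs : h ∈ s := ⟨neg_abs_le h, le_abs_self h⟩
  have hsub : ∀ t ∈ s, a0 + t ∈ Metric.ball a0 δ := by
    intro t ht
    rw [Metric.mem_ball, Real.dist_eq, add_sub_cancel_left]
    have : |t| ≤ |h| := abs_le.2 ⟨ht.1, ht.2⟩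
    exact lt_of_le_of_lt this (lt_of_lt_of_le hh (min_le_right _ _))
  have hder : ∀ t ∈ s, HasDerivWithinAt
      (fun t => θ0 (a0 + t) - t * d1 - t^2 * (d2/2))
      (deriv θ0 (a0 + t) - d1 - t * d2) s t := by
    intro t ht
    have h1 : HasDerivAt (fun t : ℝ => θ0 (a0 + t)) (deriv θ0 (a0 + t)) t := by
      have := HasDerivAt.comp t (hg _ (hsub t ht)) ((hasDerivAt_id t).const_add a0)
      rw [mul_one] at this
      exact this
    have h2 : HasDerivAt (fun t : ℝ => t * d1) d1 t := hasDerivAt_mul_const d1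
    have h3 : HasDerivAt (fun t : ℝ => t^2 * (d2/2)) (t * d2) t := by
      have := (hasDerivAt_pow 2 t).mul_const (d2/2)
      refine this.congr_deriv ?_
      ring
    exact ((h1.sub h2).sub h3).hasDerivWithinAt
  have hbd : ∀ t ∈ s, ‖deriv θ0 (a0 + t) - d1 - t * d2‖ ≤ ε * |h| := by
    intro t ht
    have ht' : |t| ≤ |h| := abs_le.2 ⟨ht.1, ht.2⟩
    have hdist : dist (a0 + t) a0 < η := by
      rw [Real.dist_eq, add_sub_cancel_left]
      exact lt_of_le_of_lt ht' (lt_of_lt_of_le hh (min_le_left _ _))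
    have := hbound hdist
    simp only [add_sub_cancel_left, smul_eq_mul] at this
    calc ‖deriv θ0 (a0 + t) - d1 - t * d2‖ ≤ ε * ‖t‖ := this
      _ ≤ ε * |h| := by
          rw [Real.norm_eq_abs]
          exact mul_le_mul_of_nonneg_left ht' (le_of_lt hε)
  have := (convex_Icc _ _).norm_image_sub_le_of_norm_hasDerivWithin_le hder hbd h0s hhs
  have heq : (θ0 (a0 + h) - h * d1 - h^2 * (d2/2))
      - (θ0 (a0 + 0) - 0 * d1 - 0^2 * (d2/2))
      = θ0 (a0 + h) - θ0 a0 - h * d1 - h^2/2 * d2 := by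
    simp; ring
  rw [heq] at this
  calc |θ0 (a0 + h) - θ0 a0 - h * d1 - h^2/2 * d2| ≤ ε * |h| * ‖h - 0‖ := this
    _ = ε * h^2 := by
        rw [sub_zero, Real.norm_eq_abs, mul_assoc, ← abs_mul]
        rw [show h * h = h^2 by ring, abs_of_nonneg (sq_nonneg h)]

/-- Consistency of the third-order local polynomial second-derivative functional:
under twice continuous differentiability of `θ0` near `a0` (no more smoothness needed),
`θ_b^{(2)}(a0) → θ0''(a0)` as `b → 0`. -/
theorem local_cubic_second_derivative_consistency
    (K f0 θ0 : ℝ → ℝ) (a0 δ : ℝ) (hδ : 0 < δ) (LK Lf : NNReal)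
    (hKpos : ∀ u, 0 ≤ K u) (hKsymm : ∀ u, K (-u) = K u)
    (hKsupp : ∀ u, 1 < |u| → K u = 0)
    (hKlip : LipschitzWith LK K)
    (hKone : (∫ u, K u) = 1)
    (hS4 : IsUnit (kernelMomentMatrix4 K).det)
    (hf0pos : ∀ a ∈ Set.Icc (a0 - δ) (a0 + δ), 0 < f0 a)
    (hf0lip : LipschitzOnWith Lf f0 (Set.Icc (a0 - δ) (a0 + δ)))
    (hθ : ContDiffOn ℝ 2 θ0 (Metric.ball a0 δ)) :
    Tendsto (fun b : ℝ => lcSecondDeriv K f0 θ0 a0 b)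
      (𝓝[>] 0) (𝓝 (deriv (deriv θ0) a0)) := by
  set d1 : ℝ := deriv θ0 a0 with hd1
  set d2 : ℝ := deriv (deriv θ0) a0 with hd2
  have ha0 : a0 ∈ Set.Icc (a0 - δ) (a0 + δ) := by
    constructor <;> linarith
  have hf0c : ContinuousOn f0 (Set.Icc (a0 - δ) (a0 + δ)) := hf0lip.continuousOn
  obtain ⟨Cf, hCf⟩ := isCompact_Icc.exists_bound_of_continuousOn hf0c
  have hCf0 : 0 ≤ Cf := le_trans (norm_nonneg _) (hCf a0 ha0)
  have hKc : Continuous K := hKlip.continuous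
  have hball : Metric.ball a0 δ ⊆ Set.Icc (a0 - δ) (a0 + δ) := by
    intro x hx
    rw [Metric.mem_ball, Real.dist_eq, abs_sub_lt_iff] at hx
    constructor <;> linarith [hx.1, hx.2]
  have hKzero : ∀ u : ℝ, u ∉ Set.Icc (-1:ℝ) 1 → K u = 0 := by
    intro u hu
    apply hKsupp
    rw [Set.mem_Icc, not_and_or] at hu
    rcases hu with h | h <;> [skip; skip] <;> rw [abs] <;> push_neg at h
    · exact lt_of_lt_of_le (by linarith) (le_max_right u (-u))
    · exact lt_of_lt_of_le h (le_max_left u (-u))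
  have hIoo : Set.Ioo (0:ℝ) δ ∈ 𝓝[>] (0:ℝ) := Ioo_mem_nhdsGT_of_mem ⟨le_refl 0, hδ⟩
  have hmem : ∀ b ∈ Set.Ioo (0:ℝ) δ, ∀ u ∈ Set.Icc (-1:ℝ) 1,
      a0 + b * u ∈ Metric.ball a0 δ := by
    intro b hb u hu
    rw [Metric.mem_ball, Real.dist_eq, add_sub_cancel_left, abs_mul,
      abs_of_pos hb.1]
    have h1 : |u| ≤ 1 := abs_le.2 ⟨hu.1, hu.2⟩
    calc b * |u| ≤ b * 1 := by nlinarith [hb.1]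
    _ < δ := by linarith [hb.2]
  have integ : ∀ (p : ℕ) (g : ℝ → ℝ), ContinuousOn g (Metric.ball a0 δ) →
      ∀ b ∈ Set.Ioo (0:ℝ) δ, Integrable (fun u => u ^ p * K u * g (a0 + b * u)) := by
    intro p g hg b hb
    apply integrable_of_kernel_support
    · intro u hu
      rw [hKzero u hu]; ring
    · apply ContinuousOn.mul
      · exact ((continuous_pow p).mul hKc).continuousOn
      · exact hg.comp (by fun_prop) (fun u hu => hmem b hb u hu)
  have hθc : ContinuousOn θ0 (Metric.ball a0 δ) := hθ.continuousOn
  have hf0cb : ContinuousOn f0 (Metric.ball a0 δ) := hf0c.mono hball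
  -- dominated convergence for the moment integrals
  have key : ∀ p : ℕ, Tendsto (fun b => ∫ u, u ^ p * K u * f0 (a0 + b * u)) (𝓝[>] (0:ℝ))
      (𝓝 (∫ u, u ^ p * K u * f0 a0)) := by
    intro p
    apply tendsto_integral_filter_of_dominated_convergence (fun u => |u|^p * K u * Cf)
    · filter_upwards [hIoo] with b hb
      exact (integ p f0 (hf0c.mono hball) b hb).aestronglyMeasurable
    · filter_upwards [hIoo] with b hb
      apply Eventually.of_forall; intro u
      by_cases hu : u ∈ Set.Icc (-1:ℝ) 1
      · have hbd := hCf _ (hball (hmem b hb u hu))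
        calc ‖u^p * K u * f0 (a0 + b*u)‖ = |u|^p * K u * ‖f0 (a0 + b*u)‖ := by
              rw [norm_mul, norm_mul, Real.norm_eq_abs, Real.norm_eq_abs, abs_pow,
                abs_of_nonneg (hKpos u)]
          _ ≤ |u|^p * K u * Cf := by
              apply mul_le_mul_of_nonneg_left hbd (by have := hKpos u; positivity)
      · rw [hKzero u hu]; simp
    · apply integrable_of_kernel_support
      · intro u hu; rw [hKzero u hu]; ring
      · exact (((continuous_abs.pow p).mul hKc).mul continuous_const).continuousOn
    · apply Eventually.of_forall; intro u
      by_cases hK : K u = 0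
      · simp only [hK, mul_zero, zero_mul]; exact tendsto_const_nhds
      · have hu : u ∈ Set.Icc (-1:ℝ) 1 := by
          by_contra h; exact hK (hKzero u h)
        apply Tendsto.const_mul
        have hc : ContinuousWithinAt f0 (Set.Icc (a0 - δ) (a0 + δ)) a0 := hf0c a0 ha0
        apply hc.tendsto.comp
        rw [tendsto_nhdsWithin_iff]
        constructor
        · have : Tendsto (fun b : ℝ => a0 + b * u) (𝓝 0) (𝓝 (a0 + 0 * u)) :=
            (continuous_const.add (continuous_id.mul continuous_const)).tendsto 0
          simpa using this.mono_left nhdsWithin_le_nhds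
        · filter_upwards [hIoo] with b hb
          exact hball (hmem b hb u hu)
  -- the limiting matrix
  set M0 : Matrix (Fin 4) (Fin 4) ℝ := f0 a0 • kernelMomentMatrix4 K with hM0
  have hM0entry : ∀ i j : Fin 4, M0 i j = ∫ u, u ^ ((i:ℕ)+(j:ℕ)) * K u * f0 a0 := by
    intro i j
    rw [integral_mul_const]
    show f0 a0 * kernelMomentMatrix4 K i j = _
    rw [mul_comm]
    rfl
  have hMtends : Tendsto (fun b => lcMatrix K f0 a0 b) (𝓝[>] (0:ℝ)) (𝓝 M0) := by
    have h2 : Tendsto (fun b => (Matrix.of fun i j =>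
        ∫ u, u ^ ((i:ℕ)+(j:ℕ)) * K u * f0 (a0 + b * u)) : ℝ → Matrix (Fin 4) (Fin 4) ℝ)
        (𝓝[>] (0:ℝ)) (𝓝 M0) := by
      refine tendsto_pi_nhds.2 ?_
      intro i
      rw [tendsto_pi_nhds]
      intro j
      have := key ((i:ℕ)+(j:ℕ))
      rw [← hM0entry i j] at this
      exact this
    apply h2.congr'
    filter_upwards [hIoo] with b hb
    ext i j
    exact (lcMatrix_eq K f0 a0 δ b hb i j).symm
  have hf0a0 : 0 < f0 a0 := hf0pos a0 ha0
  have hdetne : M0.det ≠ 0 := by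
    have h4 : M0.det = (f0 a0)^4 * (kernelMomentMatrix4 K).det := by
      rw [hM0, Matrix.det_smul]
      norm_num
    rw [h4]
    exact mul_ne_zero (pow_ne_zero _ (ne_of_gt hf0a0)) (isUnit_iff_ne_zero.1 hS4)
  have hIT : Tendsto (fun b => (lcMatrix K f0 a0 b)⁻¹) (𝓝[>] (0:ℝ)) (𝓝 M0⁻¹) := by
    have hcont : ContinuousAt Inv.inv M0 :=
      continuousAt_matrix_inv M0 (by rw [Ring.inverse_eq_inv']; exact continuousAt_inv₀ hdetne)
    exact hcont.tendsto.comp hMtends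
  have hUnit : ∀ᶠ b in 𝓝[>] (0:ℝ), IsUnit (lcMatrix K f0 a0 b).det := by
    have hdt : Tendsto (fun b => (lcMatrix K f0 a0 b).det) (𝓝[>] (0:ℝ)) (𝓝 M0.det) :=
      (Continuous.matrix_det continuous_id).continuousAt.tendsto.comp hMtends
    filter_upwards [hdt.eventually_ne hdetne] with b hb using isUnit_iff_ne_zero.2 hb
  -- the remainder vector
  set ρ : ℝ → Fin 4 → ℝ := fun b i => ∫ u, u ^ (i:ℕ) * K u *
      (f0 (a0 + b * u) *
        (θ0 (a0 + b * u) - θ0 a0 - ((a0 + b * u) - a0) * d1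
          - ((a0 + b * u) - a0)^2/2 * d2)) with hρdef
  set C2 : ℝ := ∫ u, u^2 * K u with hC2def
  have hC2 : 0 ≤ C2 := integral_nonneg (fun u => by have := hKpos u; positivity)
  have hρbound : ∀ ε : ℝ, 0 < ε → ∀ᶠ b in 𝓝[>] (0:ℝ), ∀ i : Fin 4,
      |ρ b i| ≤ ε * b^2 * (Cf * C2) := by
    intro ε hε
    have htε := taylor2 θ0 a0 δ hδ hθ ε hε
    rw [Metric.eventually_nhds_iff] at htε
    obtain ⟨η, hη, hR⟩ := htε
    have hIoo' : Set.Ioo (0:ℝ) (min η δ) ∈ 𝓝[>] (0:ℝ) :=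
      Ioo_mem_nhdsGT_of_mem ⟨le_refl 0, lt_min hη hδ⟩
    filter_upwards [hIoo'] with b hb i
    have hbδ : b ∈ Set.Ioo (0:ℝ) δ := ⟨hb.1, lt_of_lt_of_le hb.2 (min_le_right _ _)⟩
    have hbη : b < η := lt_of_lt_of_le hb.2 (min_le_left _ _)
    have hb2 : (0:ℝ) < b^2 := by have := hb.1; positivity
    have hbound' : ‖ρ b i‖ ≤ ∫ u, (u^2 * K u) * (Cf * (ε * b^2)) := by
      apply norm_integral_le_of_norm_le
      · exact (integrable_of_kernel_support
          (fun u hu => by rw [hKzero u hu]; ring)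
          (((continuous_pow 2).mul hKc).mul continuous_const).continuousOn)
      · apply Eventually.of_forall
        intro u
        by_cases hu : u ∈ Set.Icc (-1:ℝ) 1
        · have hu1 : |u| ≤ 1 := abs_le.2 ⟨hu.1, hu.2⟩
          have hfb := hCf _ (hball (hmem b hbδ u hu))
          have hQb : |θ0 (a0 + b * u) - θ0 a0 - ((a0 + b * u) - a0) * d1
              - ((a0 + b * u) - a0)^2/2 * d2| ≤ ε * (b*u)^2 := by
            have hdist : dist (b * u) 0 < η := by
              rw [Real.dist_eq, sub_zero, abs_mul, abs_of_pos hb.1]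
              calc b * |u| ≤ b * 1 := by nlinarith [hb.1]
                _ < η := by linarith
            have := hR hdist
            simpa [add_sub_cancel_left] using this
          calc ‖u ^ (i:ℕ) * K u * (f0 (a0 + b * u) * (θ0 (a0 + b * u) - θ0 a0
              - ((a0 + b * u) - a0) * d1 - ((a0 + b * u) - a0)^2/2 * d2))‖
              = |u|^(i:ℕ) * K u * (|f0 (a0 + b * u)| * |θ0 (a0 + b * u) - θ0 a0
                - ((a0 + b * u) - a0) * d1 - ((a0 + b * u) - a0)^2/2 * d2|) := by
                rw [norm_mul, norm_mul, Real.norm_eq_abs, Real.norm_eq_abs,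
                  Real.norm_eq_abs, abs_mul, abs_pow, abs_of_nonneg (hKpos u)]
            _ ≤ 1 * K u * (Cf * (ε * (b*u)^2)) := by
                have hKu := hKpos u
                have hfb' : |f0 (a0 + b * u)| ≤ Cf := by
                  rw [← Real.norm_eq_abs]; exact hfb
                apply mul_le_mul
                · apply mul_le_mul_of_nonneg_right _ hKu
                  exact pow_le_one₀ (abs_nonneg u) hu1
                · apply mul_le_mul hfb' hQb (abs_nonneg _) hCf0
                · positivity
                · positivity
            _ = (u^2 * K u) * (Cf * (ε * b^2)) := by
                rw [mul_pow]
                ring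
        · rw [hKzero u hu]
          have : (0:ℝ) ≤ u^2 * 0 * (Cf * (ε * b^2)) := by simp
          simpa using this
    have hval : (∫ u, (u^2 * K u) * (Cf * (ε * b^2))) = ε * b^2 * (Cf * C2) := by
      rw [integral_mul_const, hC2def]
      ring
    rw [Real.norm_eq_abs] at hbound'
    rw [← hval]
    exact hbound'
  -- the rescaled remainder tends to zero
  have hwz : ∀ i : Fin 4, Tendsto (fun b => 1/b^2 * ρ b i) (𝓝[>] (0:ℝ)) (𝓝 0) := by
    intro i
    rw [NormedAddCommGroup.tendsto_nhds_zero]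
    intro ε hε
    have hε' : 0 < ε / (Cf * C2 + 1) := by positivity
    filter_upwards [hρbound _ hε', hIoo] with b hb hbI
    have hb2 : (0:ℝ) < b^2 := by have := hbI.1; positivity
    have h1 : |ρ b i| ≤ ε / (Cf * C2 + 1) * b^2 * (Cf * C2) := hb i
    have h2 : ‖1/b^2 * ρ b i‖ = |ρ b i| / b^2 := by
      rw [Real.norm_eq_abs, abs_mul, abs_div, abs_one, abs_of_pos hb2]
      ring
    rw [h2]
    rw [div_lt_iff₀ hb2]
    calc |ρ b i| ≤ ε / (Cf * C2 + 1) * b^2 * (Cf * C2) := h1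
      _ < ε / (Cf * C2 + 1) * b^2 * (Cf * C2 + 1) := by
          apply mul_lt_mul_of_pos_left (by linarith) (by positivity)
      _ = ε * b^2 := by field_simp
  have hmain : Tendsto (fun b => ((lcMatrix K f0 a0 b)⁻¹ *ᵥ fun i => 1/b^2 * ρ b i) 2)
      (𝓝[>] (0:ℝ)) (𝓝 0) := by
    have hexp : ∀ b : ℝ, ((lcMatrix K f0 a0 b)⁻¹ *ᵥ fun i => 1/b^2 * ρ b i) 2
        = ∑ j : Fin 4, (lcMatrix K f0 a0 b)⁻¹ 2 j * (1/b^2 * ρ b j) := by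
      intro b
      simp [Matrix.mulVec, dotProduct]
    simp only [hexp]
    have hentry : ∀ j : Fin 4, Tendsto (fun b => (lcMatrix K f0 a0 b)⁻¹ 2 j)
        (𝓝[>] (0:ℝ)) (𝓝 (M0⁻¹ 2 j)) := by
      intro j
      have := hIT
      replace this := tendsto_pi_nhds.1 this
      have := this 2
      rw [tendsto_pi_nhds] at this
      exact this j
    have := tendsto_finset_sum (Finset.univ : Finset (Fin 4))
      (fun j _ => (hentry j).mul (hwz j))
    simpa using this
  -- final assembly
  have hG : Tendsto (fun b => d2 + 2 * ((lcMatrix K f0 a0 b)⁻¹ *ᵥ fun i => 1/b^2 * ρ b i) 2)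
      (𝓝[>] (0:ℝ)) (𝓝 d2) := by
    have h0 : Tendsto (fun _ : ℝ => d2) (𝓝[>] (0:ℝ)) (𝓝 d2) := tendsto_const_nhds
    have := h0.add (hmain.const_mul 2)
    simpa using this
  apply Tendsto.congr' _ hG
  filter_upwards [hIoo, hUnit] with b hb hU
  have hb0 : b ≠ 0 := ne_of_gt hb.1
  show d2 + 2 * ((lcMatrix K f0 a0 b)⁻¹ *ᵥ fun i => 1/b^2 * ρ b i) 2
      = lcSecondDeriv K f0 θ0 a0 b
  rw [lcSecondDeriv]
  have hv : (fun i => ∫ a, lcWeight a0 b a i * (K ((a - a0)/b)/b) * θ0 a * f0 a)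
      = (lcMatrix K f0 a0 b) *ᵥ ![θ0 a0, b * d1, b^2 * (d2/2), 0] + ρ b := by
    funext i
    rw [lcVec_eq K f0 θ0 a0 δ b hb i,
      decomp K f0 θ0 a0 δ b hb d1 d2 (fun p g hg => integ p g hg b hb) hθc hf0cb i]
    rfl
  rw [hv, Matrix.mulVec_add, Matrix.mulVec_mulVec, Matrix.nonsing_inv_mul _ hU,
    Matrix.one_mulVec]
  have hsmul : ((lcMatrix K f0 a0 b)⁻¹ *ᵥ fun i => 1/b^2 * ρ b i)
      = (1/b^2) • ((lcMatrix K f0 a0 b)⁻¹ *ᵥ ρ b) := by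
    rw [← Matrix.mulVec_smul]
    congr 1
  rw [hsmul]
  simp only [Pi.add_apply, Pi.smul_apply, smul_eq_mul]
  have hc2 : (![θ0 a0, b * d1, b^2 * (d2/2), 0] : Fin 4 → ℝ) 2 = b^2 * (d2/2) := rfl
  rw [hc2]
  field_simp
end
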